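/- Solution of the two-scale variational principle: fix a function H : X_2 × X_1 → ℝ and real parameters μ and γ > −1. Among all probability distributions p on X_2 × X_1, the functional φ[p] = S[p^{<1}] + (1+γ) Σ_{x_1} p^{<1}(x_1) S[p^{<2}(·|x_1)] + μ Σ_{x_2,x_1} p(x_2,x_1) H(x_2,x_1) is uniquely maximized by the two-scale measure given by p^{<2}(x_2|x_1) = exp(ζ₂ H(x_2,x_1))/Z_1(x_1) with ζ₂ = μ/(1+γ), Z_1(x_1) = Σ_{x_2} exp(ζ₂ H(x_2,x_1)), and p^{<1}(x_1) = Z_1(x_1)^{1+γ} / Σ_{y_1} Z_1(y_1)^{1+γ}. Furthermore the maximal value equals log Σ_{x_1} Z_1(x_1)^{1+γ}. -/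

import Mathlib

open Finset Real

/- ## Gibbs inequality lemmas -/

lemma term_le {w a A : ℝ} (hw : 0 ≤ w) (ha : 0 < a) (hA : 0 < A) :
    negMulLog w + w * log a ≤ w * log A + (a / A - w) := by
  rcases hw.eq_or_lt with h | h
  · simp [← h, negMulLog]
    positivity
  · have ht : 0 < a / (w * A) := by positivity
    have := log_le_sub_one_of_pos ht
    have hlog : log (a / (w * A)) = log a - log w - log A := by
      rw [log_div (ne_of_gt ha) (by positivity), log_mul (ne_of_gt h) (ne_of_gt hA)]
      ring
    have hw' : w * (a / (w * A)) = a / A := by field_simp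
    have hmul := mul_le_mul_of_nonneg_left this (le_of_lt h)
    rw [hlog] at hmul
    simp only [negMulLog]
    nlinarith [hw', hmul]

lemma term_eq {w a A : ℝ} (hw : 0 ≤ w) (ha : 0 < a) (hA : 0 < A)
    (heq : negMulLog w + w * log a = w * log A + (a / A - w)) : w = a / A := by
  rcases hw.eq_or_lt with h | h
  · exfalso
    rw [← h] at heq
    simp [negMulLog] at heq
    have : 0 < a / A := by positivity
    linarith [heq]
  · by_contra hne
    have ht : 0 < a / (w * A) := by positivity
    have hne1 : a / (w * A) ≠ 1 := by
      intro h1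
      apply hne
      field_simp at h1 ⊢
      linarith [h1]
    have := log_lt_sub_one_of_pos ht hne1
    have hlog : log (a / (w * A)) = log a - log w - log A := by
      rw [log_div (ne_of_gt ha) (by positivity), log_mul (ne_of_gt h) (ne_of_gt hA)]
      ring
    have hw' : w * (a / (w * A)) = a / A := by field_simp
    have hmul := mul_lt_mul_of_pos_left this h
    rw [hlog] at hmul
    simp only [negMulLog] at heq
    nlinarith [hw', hmul]

lemma gibbs_le {ι : Type*} [Fintype ι] (w a : ι → ℝ) (hw : ∀ i, 0 ≤ w i)
    (hw1 : ∑ i, w i = 1) (ha : ∀ i, 0 < a i) :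
    ∑ i, (negMulLog (w i) + w i * log (a i)) ≤ log (∑ i, a i) := by
  have hne : Nonempty ι := by
    by_contra h
    simp [not_nonempty_iff.mp h] at hw1
  have hA : 0 < ∑ i, a i := Finset.sum_pos (fun i _ => ha i) univ_nonempty
  calc ∑ i, (negMulLog (w i) + w i * log (a i))
      ≤ ∑ i, (w i * log (∑ j, a j) + (a i / (∑ j, a j) - w i)) :=
        Finset.sum_le_sum fun i _ => term_le (hw i) (ha i) hA
    _ = log (∑ i, a i) := by
        rw [Finset.sum_add_distrib, ← Finset.sum_mul, hw1, Finset.sum_sub_distrib,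
          ← Finset.sum_div, div_self (ne_of_gt hA), hw1]
        ring

lemma gibbs_eq_imp {ι : Type*} [Fintype ι] (w a : ι → ℝ) (hw : ∀ i, 0 ≤ w i)
    (hw1 : ∑ i, w i = 1) (ha : ∀ i, 0 < a i)
    (heq : ∑ i, (negMulLog (w i) + w i * log (a i)) = log (∑ i, a i)) :
    ∀ i, w i = a i / ∑ j, a j := by
  have hne : Nonempty ι := by
    by_contra h
    simp [not_nonempty_iff.mp h] at hw1
  have hA : 0 < ∑ i, a i := Finset.sum_pos (fun i _ => ha i) univ_nonempty
  have hsum2 : ∑ i, (w i * log (∑ j, a j) + (a i / (∑ j, a j) - w i)) = log (∑ i, a i) := by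
    rw [Finset.sum_add_distrib, ← Finset.sum_mul, hw1, Finset.sum_sub_distrib,
      ← Finset.sum_div, div_self (ne_of_gt hA), hw1]
    ring
  have hptwise : ∀ i ∈ univ, negMulLog (w i) + w i * log (a i) =
      w i * log (∑ j, a j) + (a i / (∑ j, a j) - w i) := by
    apply (Finset.sum_eq_sum_iff_of_le (fun i _ => term_le (hw i) (ha i) hA)).mp
    rw [heq, hsum2]
  exact fun i => term_eq (hw i) (ha i) hA (hptwise i (mem_univ i))

lemma gibbs_eq_of {ι : Type*} [Fintype ι] [Nonempty ι] (w a : ι → ℝ) (ha : ∀ i, 0 < a i)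
    (hwdef : ∀ i, w i = a i / ∑ j, a j) :
    ∑ i, (negMulLog (w i) + w i * log (a i)) = log (∑ i, a i) := by
  have hA : 0 < ∑ i, a i := Finset.sum_pos (fun i _ => ha i) univ_nonempty
  have : ∀ i, negMulLog (w i) + w i * log (a i) = (a i / ∑ j, a j) * log (∑ j, a j) := by
    intro i
    rw [hwdef i, negMulLog, log_div (ne_of_gt (ha i)) (ne_of_gt hA)]
    ring
  rw [Finset.sum_congr rfl (fun i _ => this i), ← Finset.sum_mul, ← Finset.sum_div,
    div_self (ne_of_gt hA), one_mul]

/- ## Given definitions -/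

/-- Marginal on `X₁` of a distribution on `X₂ × X₁`. -/
noncomputable def marg1 {X₁ X₂ : Type*} [Fintype X₂] (p : X₂ × X₁ → ℝ) (x₁ : X₁) : ℝ :=
  ∑ x₂ : X₂, p (x₂, x₁)

/-- Conditional distribution on `X₂` given `x₁`. -/
noncomputable def cond2 {X₁ X₂ : Type*} [Fintype X₂] (p : X₂ × X₁ → ℝ)
    (x₂ : X₂) (x₁ : X₁) : ℝ :=
  p (x₂, x₁) / marg1 p x₁

/-- The functional `φ[p] = S[p^{<1}] + (1+γ) Σ_{x₁} p^{<1}(x₁) S[p^{<2}(·|x₁)]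
+ μ Σ p H`. -/
noncomputable def phi {X₁ X₂ : Type*} [Fintype X₁] [Fintype X₂]
    (H : X₂ × X₁ → ℝ) (μ γ : ℝ) (p : X₂ × X₁ → ℝ) : ℝ :=
  (∑ x₁, negMulLog (marg1 p x₁)) +
    (1 + γ) * ∑ x₁, marg1 p x₁ * ∑ x₂, negMulLog (cond2 p x₂ x₁) +
    μ * ∑ z, p z * H z

/-- The inner partition function `Z₁(x₁) = Σ_{x₂} e^{ζ₂ H(x₂,x₁)}`. -/
noncomputable def Z1 {X₁ X₂ : Type*} [Fintype X₂] (H : X₂ × X₁ → ℝ) (ζ₂ : ℝ)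
    (x₁ : X₁) : ℝ :=
  ∑ x₂, Real.exp (ζ₂ * H (x₂, x₁))

/-- The two-scale measure `p(x₂,x₁) = [Z₁(x₁)^{1+γ}/Σ_y Z₁(y)^{1+γ}]·[e^{ζ₂H}/Z₁(x₁)]`. -/
noncomputable def twoScale {X₁ X₂ : Type*} [Fintype X₁] [Fintype X₂]
    (H : X₂ × X₁ → ℝ) (μ γ : ℝ) (z : X₂ × X₁) : ℝ :=
  (Z1 H (μ / (1 + γ)) z.2 ^ (1 + γ) / ∑ y₁, Z1 H (μ / (1 + γ)) y₁ ^ (1 + γ)) *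
    (Real.exp ((μ / (1 + γ)) * H z) / Z1 H (μ / (1 + γ)) z.2)

/- ## Auxiliary lemmas -/

section aux
variable {X₁ X₂ : Type*} [Fintype X₁] [Fintype X₂]

lemma sum_prod_eq (f : X₂ × X₁ → ℝ) : ∑ z, f z = ∑ x₁, ∑ x₂, f (x₂, x₁) := by
  rw [Fintype.sum_prod_type]
  exact Finset.sum_comm


lemma marg1_nonneg (p : X₂ × X₁ → ℝ) (hp : ∀ z, 0 ≤ p z) (x₁ : X₁) : 0 ≤ marg1 p x₁ :=
  Finset.sum_nonneg fun x₂ _ => hp (x₂, x₁)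

lemma Z1_pos [Nonempty X₂] (H : X₂ × X₁ → ℝ) (ζ : ℝ) (x₁ : X₁) : 0 < Z1 H ζ x₁ :=
  Finset.sum_pos (fun x₂ _ => Real.exp_pos _) univ_nonempty

lemma phi_decomp (H : X₂ × X₁ → ℝ) (μ γ : ℝ) (p : X₂ × X₁ → ℝ) :
    phi H μ γ p = ∑ x₁, (negMulLog (marg1 p x₁) +
      (1 + γ) * (marg1 p x₁ * ∑ x₂, negMulLog (cond2 p x₂ x₁)) +
      μ * ∑ x₂, p (x₂, x₁) * H (x₂, x₁)) := by
  rw [phi, sum_prod_eq (fun z => p z * H z)]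
  rw [Finset.sum_add_distrib, Finset.sum_add_distrib, Finset.mul_sum, Finset.mul_sum]

lemma inner_rewrite (H : X₂ × X₁ → ℝ) (μ γ : ℝ) (hγ : -1 < γ) (p : X₂ × X₁ → ℝ) (x₁ : X₁)
    (hq : 0 < marg1 p x₁) :
    negMulLog (marg1 p x₁) + (1 + γ) * (marg1 p x₁ * ∑ x₂, negMulLog (cond2 p x₂ x₁)) +
      μ * ∑ x₂, p (x₂, x₁) * H (x₂, x₁)
    = negMulLog (marg1 p x₁) + (1 + γ) * marg1 p x₁ *
        ∑ x₂, (negMulLog (cond2 p x₂ x₁) +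
          cond2 p x₂ x₁ * Real.log (Real.exp ((μ / (1 + γ)) * H (x₂, x₁)))) := by
  have hc : (0:ℝ) < 1 + γ := by linarith
  have hpr : ∀ x₂, p (x₂, x₁) = cond2 p x₂ x₁ * marg1 p x₁ := fun x₂ =>
    (div_mul_cancel₀ _ hq.ne').symm
  have h2 : μ * ∑ x₂, p (x₂, x₁) * H (x₂, x₁)
      = (1 + γ) * marg1 p x₁ * ∑ x₂, cond2 p x₂ x₁ * ((μ / (1 + γ)) * H (x₂, x₁)) := by
    rw [Finset.mul_sum, Finset.mul_sum]
    refine Finset.sum_congr rfl fun x₂ _ => ?_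
    rw [hpr x₂]
    field_simp
  simp only [Real.log_exp]
  rw [Finset.sum_add_distrib, h2]
  ring

lemma cond2_nonneg (p : X₂ × X₁ → ℝ) (hp : ∀ z, 0 ≤ p z) (x₂ : X₂) (x₁ : X₁) :
    0 ≤ cond2 p x₂ x₁ :=
  div_nonneg (hp _) (marg1_nonneg p hp x₁)

lemma cond2_sum (p : X₂ × X₁ → ℝ) (x₁ : X₁) (hq : 0 < marg1 p x₁) :
    ∑ x₂, cond2 p x₂ x₁ = 1 := by
  simp only [cond2, ← Finset.sum_div]
  exact div_self hq.ne'

lemma inner_bound [Nonempty X₂] (H : X₂ × X₁ → ℝ) (μ γ : ℝ) (hγ : -1 < γ)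
    (p : X₂ × X₁ → ℝ) (hp : ∀ z, 0 ≤ p z) (x₁ : X₁) :
    negMulLog (marg1 p x₁) + (1 + γ) * (marg1 p x₁ * ∑ x₂, negMulLog (cond2 p x₂ x₁)) +
      μ * ∑ x₂, p (x₂, x₁) * H (x₂, x₁)
    ≤ negMulLog (marg1 p x₁) + marg1 p x₁ * Real.log (Z1 H (μ / (1 + γ)) x₁ ^ (1 + γ)) := by
  have hc : (0:ℝ) < 1 + γ := by linarith
  have hZ := Z1_pos H (μ / (1 + γ)) x₁
  rcases (marg1_nonneg p hp x₁).eq_or_lt with hq | hq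
  · have hp0 : ∀ x₂, p (x₂, x₁) = 0 := by
      have h0 : ∑ x₂, p (x₂, x₁) = 0 := hq.symm
      have := (Finset.sum_eq_zero_iff_of_nonneg (fun x₂ _ => hp (x₂, x₁))).mp h0
      exact fun x₂ => this x₂ (mem_univ x₂)
    simp [← hq, cond2, hp0]
  · rw [inner_rewrite H μ γ hγ p x₁ hq]
    have key := gibbs_le (fun x₂ => cond2 p x₂ x₁)
      (fun x₂ => Real.exp ((μ / (1 + γ)) * H (x₂, x₁)))
      (fun x₂ => cond2_nonneg p hp x₂ x₁) (cond2_sum p x₁ hq)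
      (fun x₂ => Real.exp_pos _)
    have hZdef : ∑ x₂, Real.exp ((μ / (1 + γ)) * H (x₂, x₁)) = Z1 H (μ / (1 + γ)) x₁ := rfl
    rw [hZdef] at key
    rw [Real.log_rpow hZ]
    nlinarith [mul_le_mul_of_nonneg_left key (by positivity : (0:ℝ) ≤ (1 + γ) * marg1 p x₁)]

lemma inner_eq_imp [Nonempty X₂] (H : X₂ × X₁ → ℝ) (μ γ : ℝ) (hγ : -1 < γ)
    (p : X₂ × X₁ → ℝ) (hp : ∀ z, 0 ≤ p z) (x₁ : X₁) (hq : 0 < marg1 p x₁)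
    (heq : negMulLog (marg1 p x₁) + (1 + γ) * (marg1 p x₁ * ∑ x₂, negMulLog (cond2 p x₂ x₁)) +
      μ * ∑ x₂, p (x₂, x₁) * H (x₂, x₁)
    = negMulLog (marg1 p x₁) + marg1 p x₁ * Real.log (Z1 H (μ / (1 + γ)) x₁ ^ (1 + γ))) :
    ∀ x₂, p (x₂, x₁) = marg1 p x₁ *
      (Real.exp ((μ / (1 + γ)) * H (x₂, x₁)) / Z1 H (μ / (1 + γ)) x₁) := by
  have hc : (0:ℝ) < 1 + γ := by linarith
  have hZ := Z1_pos H (μ / (1 + γ)) x₁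
  rw [inner_rewrite H μ γ hγ p x₁ hq, Real.log_rpow hZ] at heq
  have hsum : ∑ x₂, (negMulLog (cond2 p x₂ x₁) +
      cond2 p x₂ x₁ * Real.log (Real.exp ((μ / (1 + γ)) * H (x₂, x₁))))
      = Real.log (Z1 H (μ / (1 + γ)) x₁) := by
    have hcq : (1 + γ) * marg1 p x₁ ≠ 0 := by positivity
    apply mul_left_cancel₀ hcq
    nlinarith [heq]
  have key := gibbs_eq_imp (fun x₂ => cond2 p x₂ x₁)
    (fun x₂ => Real.exp ((μ / (1 + γ)) * H (x₂, x₁)))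
    (fun x₂ => cond2_nonneg p hp x₂ x₁) (cond2_sum p x₁ hq)
    (fun x₂ => Real.exp_pos _) (by rw [hsum]; rfl)
  intro x₂
  have hZdef : ∑ y₂, Real.exp ((μ / (1 + γ)) * H (y₂, x₁)) = Z1 H (μ / (1 + γ)) x₁ := rfl
  have h1 : cond2 p x₂ x₁ =
      Real.exp ((μ / (1 + γ)) * H (x₂, x₁)) / Z1 H (μ / (1 + γ)) x₁ := by
    have := key x₂
    simpa [hZdef] using this
  have hpr : p (x₂, x₁) = cond2 p x₂ x₁ * marg1 p x₁ := (div_mul_cancel₀ _ hq.ne').symm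
  rw [hpr, h1]
  ring

variable [Nonempty X₁] [Nonempty X₂]

lemma sum_Z1_rpow_pos (H : X₂ × X₁ → ℝ) (ζ c : ℝ) :
    0 < ∑ y₁, Z1 H ζ y₁ ^ c :=
  Finset.sum_pos (fun y₁ _ => Real.rpow_pos_of_pos (Z1_pos H ζ y₁) c) univ_nonempty

lemma marg1_twoScale (H : X₂ × X₁ → ℝ) (μ γ : ℝ) (x₁ : X₁) :
    marg1 (twoScale H μ γ) x₁ =
      Z1 H (μ / (1 + γ)) x₁ ^ (1 + γ) / ∑ y₁, Z1 H (μ / (1 + γ)) y₁ ^ (1 + γ) := by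
  have hZ := Z1_pos H (μ / (1 + γ)) x₁
  have h : ∀ x₂ : X₂, twoScale H μ γ (x₂, x₁) =
      (Z1 H (μ / (1 + γ)) x₁ ^ (1 + γ) / ∑ y₁, Z1 H (μ / (1 + γ)) y₁ ^ (1 + γ)) *
        (Real.exp ((μ / (1 + γ)) * H (x₂, x₁)) / Z1 H (μ / (1 + γ)) x₁) := fun _ => rfl
  show (∑ x₂, twoScale H μ γ (x₂, x₁)) = _
  rw [Finset.sum_congr rfl fun x₂ _ => h x₂, ← Finset.mul_sum, ← Finset.sum_div]
  rw [show (∑ x₂, Real.exp ((μ / (1 + γ)) * H (x₂, x₁))) = Z1 H (μ / (1 + γ)) x₁ from rfl]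
  rw [div_self hZ.ne', mul_one]

lemma marg1_twoScale_pos (H : X₂ × X₁ → ℝ) (μ γ : ℝ) (x₁ : X₁) :
    0 < marg1 (twoScale H μ γ) x₁ := by
  rw [marg1_twoScale]
  exact div_pos (Real.rpow_pos_of_pos (Z1_pos H _ x₁) _) (sum_Z1_rpow_pos H _ _)

lemma cond2_twoScale (H : X₂ × X₁ → ℝ) (μ γ : ℝ) (x₂ : X₂) (x₁ : X₁) :
    cond2 (twoScale H μ γ) x₂ x₁ =
      Real.exp ((μ / (1 + γ)) * H (x₂, x₁)) / Z1 H (μ / (1 + γ)) x₁ := by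
  have hC : (0:ℝ) < Z1 H (μ / (1 + γ)) x₁ ^ (1 + γ) / ∑ y₁, Z1 H (μ / (1 + γ)) y₁ ^ (1 + γ) :=
    div_pos (Real.rpow_pos_of_pos (Z1_pos H _ x₁) _) (sum_Z1_rpow_pos H _ _)
  have hts : twoScale H μ γ (x₂, x₁) =
      (Z1 H (μ / (1 + γ)) x₁ ^ (1 + γ) / ∑ y₁, Z1 H (μ / (1 + γ)) y₁ ^ (1 + γ)) *
        (Real.exp ((μ / (1 + γ)) * H (x₂, x₁)) / Z1 H (μ / (1 + γ)) x₁) := rfl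
  rw [cond2, marg1_twoScale, hts, mul_div_cancel_left₀ _ hC.ne']

lemma phi_twoScale (H : X₂ × X₁ → ℝ) (μ γ : ℝ) (hγ : -1 < γ) :
    phi H μ γ (twoScale H μ γ) =
      Real.log (∑ x₁, Z1 H (μ / (1 + γ)) x₁ ^ (1 + γ)) := by
  have hc : (0:ℝ) < 1 + γ := by linarith
  rw [phi_decomp]
  have hstep : ∀ x₁ : X₁,
      negMulLog (marg1 (twoScale H μ γ) x₁) +
        (1 + γ) * (marg1 (twoScale H μ γ) x₁ *
          ∑ x₂, negMulLog (cond2 (twoScale H μ γ) x₂ x₁)) +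
        μ * ∑ x₂, twoScale H μ γ (x₂, x₁) * H (x₂, x₁)
      = negMulLog (marg1 (twoScale H μ γ) x₁) +
        marg1 (twoScale H μ γ) x₁ * Real.log (Z1 H (μ / (1 + γ)) x₁ ^ (1 + γ)) := by
    intro x₁
    have hq := marg1_twoScale_pos H μ γ x₁
    have hZ := Z1_pos H (μ / (1 + γ)) x₁
    rw [inner_rewrite H μ γ hγ (twoScale H μ γ) x₁ hq, Real.log_rpow hZ]
    have hinner := gibbs_eq_of (fun x₂ => cond2 (twoScale H μ γ) x₂ x₁)
      (fun x₂ => Real.exp ((μ / (1 + γ)) * H (x₂, x₁)))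
      (fun x₂ => Real.exp_pos _)
      (fun x₂ => cond2_twoScale H μ γ x₂ x₁)
    have hZdef : ∑ x₂, Real.exp ((μ / (1 + γ)) * H (x₂, x₁)) = Z1 H (μ / (1 + γ)) x₁ := rfl
    rw [hZdef] at hinner
    rw [hinner]
    ring
  rw [Finset.sum_congr rfl fun x₁ _ => hstep x₁]
  exact gibbs_eq_of (fun x₁ => marg1 (twoScale H μ γ) x₁)
    (fun x₁ => Z1 H (μ / (1 + γ)) x₁ ^ (1 + γ))
    (fun x₁ => Real.rpow_pos_of_pos (Z1_pos H _ x₁) _)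
    (fun x₁ => marg1_twoScale H μ γ x₁)

lemma phi_le_log (H : X₂ × X₁ → ℝ) (μ γ : ℝ) (hγ : -1 < γ)
    (p : X₂ × X₁ → ℝ) (hp : ∀ z, 0 ≤ p z) (hp1 : ∑ z, p z = 1) :
    phi H μ γ p ≤ Real.log (∑ x₁, Z1 H (μ / (1 + γ)) x₁ ^ (1 + γ)) := by
  have hq1 : ∑ x₁, marg1 p x₁ = 1 := by rw [← hp1, sum_prod_eq]; rfl
  calc phi H μ γ p
      ≤ ∑ x₁, (negMulLog (marg1 p x₁) +
          marg1 p x₁ * Real.log (Z1 H (μ / (1 + γ)) x₁ ^ (1 + γ))) := by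
        rw [phi_decomp]
        exact Finset.sum_le_sum fun x₁ _ => inner_bound H μ γ hγ p hp x₁
    _ ≤ Real.log (∑ x₁, Z1 H (μ / (1 + γ)) x₁ ^ (1 + γ)) :=
        gibbs_le _ _ (marg1_nonneg p hp) hq1
          (fun x₁ => Real.rpow_pos_of_pos (Z1_pos H _ x₁) _)

end aux

/-- Solution of the two-scale variational principle: `φ` is uniquely maximized by the
two-scale measure and the maximal value is `log Σ_{x₁} Z₁(x₁)^{1+γ}`. -/
theorem two_scale_variational_principle {X₁ X₂ : Type*} [Fintype X₁] [Fintype X₂]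
    [Nonempty X₁] [Nonempty X₂]
    (H : X₂ × X₁ → ℝ) (μ γ : ℝ) (hγ : -1 < γ) :
    (∀ p : X₂ × X₁ → ℝ, (∀ z, 0 ≤ p z) → ∑ z, p z = 1 →
        phi H μ γ p ≤ phi H μ γ (twoScale H μ γ)) ∧
    (∀ p : X₂ × X₁ → ℝ, (∀ z, 0 ≤ p z) → ∑ z, p z = 1 →
        phi H μ γ p = phi H μ γ (twoScale H μ γ) → p = twoScale H μ γ) ∧
    phi H μ γ (twoScale H μ γ) =
      Real.log (∑ x₁, Z1 H (μ / (1 + γ)) x₁ ^ (1 + γ)) := by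
  have hval := phi_twoScale H μ γ hγ
  refine ⟨fun p hp hp1 => ?_, fun p hp hp1 heq => ?_, hval⟩
  · rw [hval]
    exact phi_le_log H μ γ hγ p hp hp1
  · -- uniqueness
    have hc : (0:ℝ) < 1 + γ := by linarith
    have hq1 : ∑ x₁, marg1 p x₁ = 1 := by rw [← hp1, sum_prod_eq]; rfl
    have hapos : ∀ x₁ : X₁, 0 < Z1 H (μ / (1 + γ)) x₁ ^ (1 + γ) :=
      fun x₁ => Real.rpow_pos_of_pos (Z1_pos H _ x₁) _
    rw [hval] at heq
    set L := Real.log (∑ x₁, Z1 H (μ / (1 + γ)) x₁ ^ (1 + γ)) with hL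
    -- the middle sum
    have houter_le : ∑ x₁, (negMulLog (marg1 p x₁) +
        marg1 p x₁ * Real.log (Z1 H (μ / (1 + γ)) x₁ ^ (1 + γ))) ≤ L :=
      gibbs_le _ _ (marg1_nonneg p hp) hq1 hapos
    have hsumF : ∑ x₁, (negMulLog (marg1 p x₁) +
        (1 + γ) * (marg1 p x₁ * ∑ x₂, negMulLog (cond2 p x₂ x₁)) +
        μ * ∑ x₂, p (x₂, x₁) * H (x₂, x₁)) = L := by
      rw [← phi_decomp]; exact heq
    have hFG : ∑ x₁, (negMulLog (marg1 p x₁) +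
        (1 + γ) * (marg1 p x₁ * ∑ x₂, negMulLog (cond2 p x₂ x₁)) +
        μ * ∑ x₂, p (x₂, x₁) * H (x₂, x₁))
        ≤ ∑ x₁, (negMulLog (marg1 p x₁) +
        marg1 p x₁ * Real.log (Z1 H (μ / (1 + γ)) x₁ ^ (1 + γ))) :=
      Finset.sum_le_sum fun x₁ _ => inner_bound H μ γ hγ p hp x₁
    have houter_eq : ∑ x₁, (negMulLog (marg1 p x₁) +
        marg1 p x₁ * Real.log (Z1 H (μ / (1 + γ)) x₁ ^ (1 + γ))) = L := by
      have := hsumF ▸ hFG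
      linarith
    have hqdef := gibbs_eq_imp _ _ (marg1_nonneg p hp) hq1 hapos houter_eq
    have hqpos : ∀ x₁, 0 < marg1 p x₁ := by
      intro x₁
      rw [hqdef x₁]
      exact div_pos (hapos x₁) (sum_Z1_rpow_pos H _ _)
    have hFGptwise := (Finset.sum_eq_sum_iff_of_le
      (fun x₁ (_ : x₁ ∈ univ) => inner_bound H μ γ hγ p hp x₁)).mp
      (by rw [hsumF, houter_eq])
    funext z
    obtain ⟨x₂, x₁⟩ := z
    have hcond := inner_eq_imp H μ γ hγ p hp x₁ (hqpos x₁) (hFGptwise x₁ (mem_univ x₁)) x₂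
    rw [hcond, hqdef x₁]
    unfold twoScale
    rfl
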